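/- Let k > 2 be an integer and let F ∈ ℝ⟦x⟧ be a formal power series in one variable such that F − x^k has order ≥ k + 1. Then there exists a unique pair (h, F*) with h ∈ ℝ and F* ∈ ℝ⟦x⟧ such that F* − x^k has order ≥ k + 1, the coefficient of x^{2k−1} in F* is 0, and F*(x − h·F(x)) = F(x), where F*(x − h·F(x)) denotes composition of formal power series (the inner series x − h·F(x) has zero constant term, so the composition is defined). Moreover h = −(1/k)·(coefficient of x^{2k−1} in F). -/

import Mathlib

noncomputable section

open PowerSeries

/-- Formal substitution of the family `a` into `f`, defined coefficientwise by a `finsum`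
(which has the correct value whenever each `a i` has zero constant term). -/
def mSubst {σ τ R : Type*} [CommSemiring R] (a : σ → MvPowerSeries τ R)
    (f : MvPowerSeries σ R) : MvPowerSeries τ R :=
  fun d => finsum fun e : σ →₀ ℕ =>
    MvPowerSeries.coeff e f * MvPowerSeries.coeff d (e.prod fun i n => (a i) ^ n)

/-- Composition of one-variable formal power series (`f ∘ a`), well behaved when `a` has zero
constant term. -/
def pComp {R : Type*} [CommSemiring R] (f a : PowerSeries R) : PowerSeries R :=
  mSubst (fun _ : Unit => a) f

namespace TubeAux
open Finset

lemma coeff_pow_eq_zero {a : PowerSeries ℝ} (ha : constantCoeff a = 0)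
    {n m : ℕ} (h : n < m) : coeff n (a ^ m) = 0 := by
  have hd : (X : PowerSeries ℝ) ^ m ∣ a ^ m :=
    pow_dvd_pow_of_dvd (PowerSeries.X_dvd_iff.mpr ha) m
  exact PowerSeries.X_pow_dvd_iff.mp hd n h

lemma coeff_pComp (f a : PowerSeries ℝ) (ha : constantCoeff a = 0) (n : ℕ) :
    coeff n (pComp f a) = ∑ m ∈ Finset.range (n + 1), coeff m f * coeff n (a ^ m) := by
  have coeff_mSubst : ∀ d : Unit →₀ ℕ,
      MvPowerSeries.coeff d (mSubst (fun _ : Unit => a) f) =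
        ∑ᶠ e : Unit →₀ ℕ, MvPowerSeries.coeff e f *
          MvPowerSeries.coeff d (e.prod fun _ j => a ^ j) := fun d => rfl
  refine Eq.trans (coeff_mSubst (Finsupp.single () n)) ?_
  have hprod : ∀ e : Unit →₀ ℕ, (e.prod fun _ j => a ^ j) = a ^ (e ()) := by
    intro e
    rw [Finsupp.prod_fintype _ _ fun _ => pow_zero a]
    exact Fintype.prod_unique _
  have hterm : ∀ e : Unit →₀ ℕ,
      MvPowerSeries.coeff e f *
        MvPowerSeries.coeff (Finsupp.single () n) (e.prod fun _ j => a ^ j) =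
      coeff (e ()) f * coeff n (a ^ (e ())) := by
    intro e
    rw [hprod e]
    congr 1
    conv_lhs => rw [Finsupp.unique_single e]
    rfl
  rw [finsum_congr hterm]
  have hsupp : (Function.support fun e : Unit →₀ ℕ => coeff (e ()) f * coeff n (a ^ (e ())))
      ⊆ ↑((Finset.range (n + 1)).image fun m => Finsupp.single () m) := by
    intro e he
    simp only [Function.mem_support] at he
    have h1 : e () ≤ n := by
      by_contra hgt
      rw [coeff_pow_eq_zero ha (by omega), mul_zero] at he
      exact he rfl
    simp only [Finset.coe_image, Set.mem_image, Finset.mem_coe, Finset.mem_range]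
    exact ⟨e (), by omega, (Finsupp.unique_single e).symm⟩
  rw [finsum_eq_sum_of_support_subset _ hsupp,
    Finset.sum_image (fun x _ y _ h => Finsupp.single_injective () h)]
  refine Finset.sum_congr rfl fun m _ => ?_
  simp [Finsupp.single_eq_same]

lemma coeff_pow_self {a : PowerSeries ℝ} (ha : constantCoeff a = 0) (n : ℕ) :
    coeff n (a ^ n) = (coeff 1 a) ^ n := by
  induction n with
  | zero => simp
  | succ n ih =>
    rw [pow_succ', PowerSeries.coeff_mul, Finset.sum_eq_single (1, n)]
    · rw [ih, pow_succ']
    · rintro ⟨i, j⟩ hmem hne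
      rw [Finset.HasAntidiagonal.mem_antidiagonal] at hmem
      rcases lt_trichotomy j n with hj | hj | hj
      · rw [coeff_pow_eq_zero ha hj, mul_zero]
      · subst hj
        have hi1 : i = 1 := by omega
        subst hi1
        exact absurd rfl hne
      · have hi : i = 0 := by omega
        subst hi
        rw [coeff_zero_eq_constantCoeff_apply, ha, zero_mul]
    · intro h
      exact absurd (Finset.HasAntidiagonal.mem_antidiagonal.mpr (by omega)) h

def solveCoeff (u G : PowerSeries ℝ) (n : ℕ) : ℝ :=
  coeff n G - ∑ m ∈ (Finset.range n).attach, solveCoeff u G m * coeff n (u ^ (m : ℕ))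
termination_by n
decreasing_by exact Finset.mem_range.mp m.2

lemma solveCoeff_eq (u G : PowerSeries ℝ) (n : ℕ) :
    solveCoeff u G n =
      coeff n G - ∑ m ∈ Finset.range n, solveCoeff u G m * coeff n (u ^ m) := by
  rw [solveCoeff, Finset.sum_attach (Finset.range n)
    (fun m => solveCoeff u G m * coeff n (u ^ m))]

lemma pComp_solve (u G : PowerSeries ℝ) (hu0 : constantCoeff u = 0)
    (hu1 : coeff 1 u = 1) : pComp (PowerSeries.mk (solveCoeff u G)) u = G := by
  ext n
  rw [coeff_pComp _ _ hu0, Finset.sum_range_succ, coeff_pow_self hu0, hu1, one_pow, mul_one,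
    PowerSeries.coeff_mk, solveCoeff_eq]
  have : ∀ m ∈ Finset.range n, coeff m (PowerSeries.mk (solveCoeff u G)) * coeff n (u ^ m)
      = solveCoeff u G m * coeff n (u ^ m) := fun m _ => by rw [PowerSeries.coeff_mk]
  rw [Finset.sum_congr rfl this]
  ring

lemma solve_unique (u G g : PowerSeries ℝ) (hu0 : constantCoeff u = 0)
    (hu1 : coeff 1 u = 1) (hg : pComp g u = G) :
    g = PowerSeries.mk (solveCoeff u G) := by
  ext n
  induction n using Nat.strong_induction_on with
  | _ n ih =>
    have h1 : coeff n G = (∑ m ∈ Finset.range n, coeff m g * coeff n (u ^ m))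
        + coeff n g := by
      rw [← hg, coeff_pComp _ _ hu0, Finset.sum_range_succ, coeff_pow_self hu0, hu1, one_pow,
        mul_one]
    have h2 : ∀ m ∈ Finset.range n, coeff m g * coeff n (u ^ m)
        = solveCoeff u G m * coeff n (u ^ m) := by
      intro m hm
      have := ih m (Finset.mem_range.mp hm)
      rw [PowerSeries.coeff_mk] at this
      rw [this]
    rw [Finset.sum_congr rfl h2] at h1
    rw [PowerSeries.coeff_mk, solveCoeff_eq]
    linarith [h1]

lemma coeff_of_orderX {k : ℕ} {f : PowerSeries ℝ}
    (hf : (k + 1 : ℕ∞) ≤ (f - (X : PowerSeries ℝ) ^ k).order) {m : ℕ} (hm : m ≤ k) :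
    coeff m f = if m = k then 1 else 0 := by
  have hlt : (m : ℕ∞) < (k : ℕ∞) + 1 := by
    exact_mod_cast Nat.lt_succ_of_le hm
  have h0 : coeff m (f - (X : PowerSeries ℝ) ^ k) = 0 :=
    PowerSeries.coeff_of_lt_order m (lt_of_lt_of_le hlt hf)
  rw [map_sub, sub_eq_zero] at h0
  rw [h0, PowerSeries.coeff_X_pow]

lemma nat_ineq1 {k i m : ℕ} (hk : 2 < k) (hm : k < m) (him : i < m) :
    2 * k - 1 - i < k * (m - i) := by
  rcases le_or_gt k i with hik | hik
  · calc 2 * k - 1 - i < k := by omega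
      _ = k * 1 := (Nat.mul_one k).symm
      _ ≤ k * (m - i) := Nat.mul_le_mul_left k (by omega)
  · calc 2 * k - 1 - i < k * 2 := by omega
      _ ≤ k * (m - i) := Nat.mul_le_mul_left k (by omega)

lemma nat_ineq2 {k i : ℕ} (hk : 2 < k) (hi : i ≤ k - 2) :
    2 * k - 1 - i < k * (k - i) := by
  calc 2 * k - 1 - i < k * 2 := by omega
    _ ≤ k * (k - i) := Nat.mul_le_mul_left k (by omega)

/-- The key coefficient computation: for `F, f = X^k + O(X^{k+1})` and any `h`, the coefficient
of `X^{2k-1}` in `f ∘ (X - h F)` is `-k h + coeff_{2k-1} f`. -/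
lemma key {k : ℕ} (hk : 2 < k) {F f : PowerSeries ℝ}
    (hF : (k + 1 : ℕ∞) ≤ (F - (X : PowerSeries ℝ) ^ k).order)
    (hf : (k + 1 : ℕ∞) ≤ (f - (X : PowerSeries ℝ) ^ k).order) (h : ℝ) :
    coeff (2 * k - 1) (pComp f (X - C h * F))
      = -(k : ℝ) * h + coeff (2 * k - 1) f := by
  set w : PowerSeries ℝ := -(C h * F) with hw
  set u : PowerSeries ℝ := X - C h * F with hu
  have hsum : u = X + w := by rw [hu, hw]; ring
  have hcw : ∀ m : ℕ, coeff m w = -(h * coeff m F) := by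
    intro m
    rw [hw, map_neg, PowerSeries.coeff_C_mul]
  have hwlow : ∀ m : ℕ, m < k → coeff m w = 0 := by
    intro m hm
    rw [hcw, coeff_of_orderX hF (le_of_lt hm), if_neg (by omega)]
    ring
  have hwk : coeff k w = -h := by
    rw [hcw, coeff_of_orderX hF le_rfl, if_pos rfl]
    ring
  have hwdvd : (X : PowerSeries ℝ) ^ k ∣ w :=
    PowerSeries.X_pow_dvd_iff.mpr fun m hm => hwlow m hm
  have hwp : ∀ i t : ℕ, t < k * i → coeff t (w ^ i) = 0 := by
    intro i t ht
    have hdv : (X : PowerSeries ℝ) ^ (k * i) ∣ w ^ i := by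
      rw [pow_mul]
      exact pow_dvd_pow_of_dvd hwdvd i
    exact PowerSeries.X_pow_dvd_iff.mp hdv t ht
  have hu0 : constantCoeff u = 0 := by
    rw [← coeff_zero_eq_constantCoeff_apply, hu, map_sub, PowerSeries.coeff_C_mul,
      coeff_of_orderX hF (by omega : 0 ≤ k), if_neg (by omega)]
    simp
  have hupow : ∀ m : ℕ, coeff (2 * k - 1) (u ^ m) =
      ∑ i ∈ Finset.range (m + 1),
        (if i ≤ 2 * k - 1 then coeff (2 * k - 1 - i) (w ^ (m - i)) else 0) * (m.choose i : ℝ) := by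
    intro m
    rw [hsum, add_pow, map_sum]
    refine Finset.sum_congr rfl fun i _ => ?_
    rw [← map_natCast (C (R := ℝ)) (m.choose i), PowerSeries.coeff_mul_C,
      PowerSeries.coeff_X_pow_mul']
  have hukey : coeff (2 * k - 1) (u ^ k) = -(k : ℝ) * h := by
    rw [hupow k, Finset.sum_eq_single (k - 1)]
    · rw [if_pos (show k - 1 ≤ 2 * k - 1 by omega), show 2 * k - 1 - (k - 1) = k by omega,
        show k - (k - 1) = 1 by omega, pow_one, hwk,
        Nat.choose_symm (show 1 ≤ k by omega), Nat.choose_one_right]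
      ring
    · intro i hi hne
      rcases eq_or_ne i k with hik | hik
      · rw [hik, show k - k = 0 by omega, pow_zero, if_pos (show k ≤ 2 * k - 1 by omega),
          PowerSeries.coeff_one, if_neg (show ¬(2 * k - 1 - k = 0) by omega), zero_mul]
      · have hile : i ≤ k - 2 := by
          have := Finset.mem_range.mp hi
          omega
        rw [if_pos (show i ≤ 2 * k - 1 by omega), hwp (k - i) (2 * k - 1 - i) (nat_ineq2 hk hile), zero_mul]
    · intro hmem
      exact absurd (Finset.mem_range.mpr (by omega)) hmem
  have huhigh : ∀ m : ℕ, k < m → m ≤ 2 * k - 1 → coeff (2 * k - 1) (u ^ m) = if m = 2 * k - 1 then 1 else 0 := by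
    intro m h1 h2
    rw [hupow m, Finset.sum_eq_single m]
    · rw [if_pos (show m ≤ 2 * k - 1 by omega), Nat.sub_self, pow_zero, PowerSeries.coeff_one,
        Nat.choose_self, Nat.cast_one, mul_one]
      split_ifs with h3 h4 h4 <;> first | rfl | omega
    · intro i hi hne
      have him : i < m := by
        have := Finset.mem_range.mp hi
        omega
      rw [if_pos (show i ≤ 2 * k - 1 by omega), hwp (m - i) (2 * k - 1 - i) (nat_ineq1 hk h1 him), zero_mul]
    · intro hmem
      exact absurd (Finset.mem_range.mpr (by omega)) hmem
  rw [coeff_pComp f u hu0]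
  have hmain : ∀ m ∈ Finset.range (2 * k - 1 + 1), coeff m f * coeff (2 * k - 1) (u ^ m)
      = (if m = k then -(k : ℝ) * h else 0) + (if m = 2 * k - 1 then coeff (2 * k - 1) f else 0) := by
    intro m hm
    have hmN : m ≤ 2 * k - 1 := by
      have := Finset.mem_range.mp hm
      omega
    rcases lt_trichotomy m k with h1 | h1 | h1
    · rw [coeff_of_orderX hf (by omega : m ≤ k), if_neg (show ¬ m = k by omega), zero_mul,
        if_neg (show ¬ m = k by omega), if_neg (show ¬ m = 2 * k - 1 by omega)]
      ring
    · rw [coeff_of_orderX hf (by omega : m ≤ k), if_pos h1, one_mul, h1, hukey,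
        if_pos rfl, if_neg (show ¬ k = 2 * k - 1 by omega)]
      ring
    · rw [huhigh m h1 hmN, if_neg (show ¬ m = k by omega)]
      rcases eq_or_ne m (2 * k - 1) with hmn | hmn
      · rw [if_pos hmn, if_pos hmn, hmn]
        ring
      · rw [if_neg hmn, if_neg hmn]
        ring
  rw [Finset.sum_congr rfl hmain, Finset.sum_add_distrib,
    Finset.sum_ite_eq' (Finset.range (2 * k - 1 + 1)) k fun _ => -(k : ℝ) * h,
    Finset.sum_ite_eq' (Finset.range (2 * k - 1 + 1)) (2 * k - 1) fun _ => coeff (2 * k - 1) f,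
    if_pos (Finset.mem_range.mpr (by omega)), if_pos (Finset.mem_range.mpr (by omega))]

end TubeAux

/-- first step in the proof of Proposition 5.1, formal version: for a formal
series `F = x^k + O(x^{k+1})` there is a unique pair `(h, F*)` with `F* = x^k + O(x^{k+1})`,
vanishing coefficient of `x^{2k-1}` in `F*`, and `F*(x - h·F(x)) = F(x)`; moreover
`h = -(1/k)·(coefficient of x^{2k-1} in F)`. -/
theorem tube_normalization_one_variable (k : ℕ) (hk : 2 < k) (F : PowerSeries ℝ)
    (hF : (k + 1 : ℕ∞) ≤ (F - (PowerSeries.X : PowerSeries ℝ) ^ k).order) :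
    (∃! p : ℝ × PowerSeries ℝ,
        (k + 1 : ℕ∞) ≤ (p.2 - (PowerSeries.X : PowerSeries ℝ) ^ k).order ∧
        PowerSeries.coeff (2 * k - 1) p.2 = 0 ∧
        pComp p.2 (PowerSeries.X - PowerSeries.C p.1 * F) = F) ∧
    ∀ p : ℝ × PowerSeries ℝ,
      ((k + 1 : ℕ∞) ≤ (p.2 - (PowerSeries.X : PowerSeries ℝ) ^ k).order ∧
        PowerSeries.coeff (2 * k - 1) p.2 = 0 ∧
        pComp p.2 (PowerSeries.X - PowerSeries.C p.1 * F) = F) →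
      p.1 = -(1 / k : ℝ) * PowerSeries.coeff (2 * k - 1) F := by
  classical
  have hkR : (k : ℝ) ≠ 0 := Nat.cast_ne_zero.mpr (by omega)
  have hmore : ∀ p : ℝ × PowerSeries ℝ,
      ((k + 1 : ℕ∞) ≤ (p.2 - (PowerSeries.X : PowerSeries ℝ) ^ k).order ∧
        PowerSeries.coeff (2 * k - 1) p.2 = 0 ∧
        pComp p.2 (PowerSeries.X - PowerSeries.C p.1 * F) = F) →
      p.1 = -(1 / k : ℝ) * PowerSeries.coeff (2 * k - 1) F := by
    rintro ⟨h, G⟩ ⟨hp1, hp2, hp3⟩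
    have hkey := TubeAux.key hk hF hp1 h
    rw [hp3, hp2] at hkey
    show h = -(1 / k : ℝ) * PowerSeries.coeff (2 * k - 1) F
    rw [hkey]
    field_simp
    ring
  set h₀ : ℝ := -(1 / k : ℝ) * PowerSeries.coeff (2 * k - 1) F with hh₀
  set u : PowerSeries ℝ := X - C h₀ * F with hu
  have hu0 : constantCoeff u = 0 := by
    rw [← coeff_zero_eq_constantCoeff_apply, hu, map_sub, PowerSeries.coeff_C_mul,
      TubeAux.coeff_of_orderX hF (by omega : 0 ≤ k), if_neg (by omega : ¬ 0 = k)]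
    simp
  have hu1 : coeff 1 u = 1 := by
    rw [hu, map_sub, PowerSeries.coeff_C_mul,
      TubeAux.coeff_of_orderX hF (by omega : 1 ≤ k), if_neg (by omega : ¬ 1 = k)]
    simp
  set Fs : PowerSeries ℝ := PowerSeries.mk (TubeAux.solveCoeff u F) with hFsdef
  have hcomp : pComp Fs u = F := TubeAux.pComp_solve u F hu0 hu1
  have hlow : ∀ m, m ≤ k → coeff m Fs = if m = k then 1 else 0 := by
    intro m
    induction m using Nat.strong_induction_on with
    | _ m ih =>
      intro hm
      have h1 : coeff m F = (∑ j ∈ Finset.range m, coeff j Fs * coeff m (u ^ j))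
          + coeff m Fs := by
        rw [← hcomp, TubeAux.coeff_pComp _ _ hu0, Finset.sum_range_succ,
          TubeAux.coeff_pow_self hu0, hu1, one_pow, mul_one]
      have h2 : ∑ j ∈ Finset.range m, coeff j Fs * coeff m (u ^ j) = 0 :=
        Finset.sum_eq_zero fun j hj => by
          have hjm := Finset.mem_range.mp hj
          rw [ih j hjm (by omega),
            if_neg (show ¬ j = k from by have := Finset.mem_range.mp hj; omega), zero_mul]
      rw [h2, zero_add] at h1
      rw [← h1, TubeAux.coeff_of_orderX hF hm]
  have horder : (k + 1 : ℕ∞) ≤ (Fs - (X : PowerSeries ℝ) ^ k).order := by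
    have hnat : ((k + 1 : ℕ) : ℕ∞) ≤ (Fs - (X : PowerSeries ℝ) ^ k).order :=
      PowerSeries.nat_le_order _ (k + 1) fun i hi => by
        rw [map_sub, hlow i (by omega), PowerSeries.coeff_X_pow, sub_self]
    exact_mod_cast hnat
  have h2k : coeff (2 * k - 1) Fs = 0 := by
    have hkey := TubeAux.key hk hF horder h₀
    rw [← hu, hcomp] at hkey
    have hcalc : coeff (2 * k - 1) Fs = coeff (2 * k - 1) F + (k : ℝ) * h₀ := by
      linarith
    rw [hcalc, hh₀]
    field_simp
    ring
  refine ⟨⟨(h₀, Fs), ⟨horder, h2k, hcomp⟩, ?_⟩, hmore⟩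
  rintro ⟨h, G⟩ hq
  have h1 : h = h₀ := hmore (h, G) hq
  have h2 : G = Fs := by
    have h3 := hq.2.2
    rw [h1] at h3
    exact TubeAux.solve_unique u F G hu0 hu1 h3
  rw [h1, h2]
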